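/- Let (Ω, 𝓑, μ) be a probability space, X a topological space, W a linear subspace of C₀(X) admitting a finite norming set C: sup_{x∈X}|f(x)| ≤ N · sup_{y∈C}|f(y)| for all f ∈ W, where N = 𝔫(W,C). Let Z : Ω → W satisfy |Z(ω)(x)| ≤ R for all ω ∈ Ω, x ∈ X. Then for any δ > 0 and independent samples ω₁,…,ω_M drawn from μ: ℙ( sup_{x∈X} |(1/M)Σ_{j=1}^M Z(ω_j)(x) − 𝔼_μ[Z(·)(x)]| ≥ 4NR√(log(2|C|/δ)/M) ) ≤ δ. -/

import Mathlib

open MeasureTheory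
open scoped ZeroAtInfty

lemma aux_exp_le_add_exp_sq (u : ℝ) : Real.exp u ≤ u + Real.exp (u ^ 2) := by
  rcases le_or_gt |u| 1 with h | h
  · have hb := Real.exp_bound h (n := 2) (by norm_num)
    have h1 : |Real.exp u - (1 + u)| ≤ |u| ^ 2 * (3 / (2 * 2)) := by
      simpa [Finset.sum_range_succ, Nat.factorial] using hb
    have h2 : Real.exp u ≤ 1 + u + u ^ 2 := by
      have := (abs_le.mp h1).2
      rw [sq_abs] at this
      nlinarith
    have h3 : u ^ 2 + 1 ≤ Real.exp (u ^ 2) := Real.add_one_le_exp _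
    linarith
  · rcases le_or_gt 0 u with hu | hu
    · have h1 : 1 < u := by rwa [abs_of_nonneg hu] at h
      have : u ≤ u ^ 2 := by nlinarith
      have h2 := Real.exp_le_exp.mpr this
      linarith
    · have h1 : 1 < -u := by rwa [abs_of_neg hu] at h
      have h2 : Real.exp u ≤ 1 := Real.exp_le_one_iff.mpr hu.le
      have h3 : -u + 1 ≤ Real.exp (-u) := Real.add_one_le_exp _
      have h4 : Real.exp (-u) ≤ Real.exp (u ^ 2) := Real.exp_le_exp.mpr (by nlinarith)
      linarith

lemma aux_int_bdd {Ω : Type*} [MeasurableSpace Ω] {μ : Measure Ω} [IsFiniteMeasure μ]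
    {f : Ω → ℝ} (hm : Measurable f) {b : ℝ} (hb : ∀ ω, |f ω| ≤ b) : Integrable f μ :=
  ⟨hm.aestronglyMeasurable,
    HasFiniteIntegral.of_bounded (C := b) (ae_of_all _ (by simpa [Real.norm_eq_abs] using hb))⟩

lemma aux_mgf_bound {Ω : Type*} [MeasurableSpace Ω] (μ : Measure Ω) [IsProbabilityMeasure μ]
    (φ : Ω → ℝ) (hm : Measurable φ) (a : ℝ) (ha : 0 ≤ a) (hb : ∀ ω, |φ ω| ≤ a)
    (h0 : ∫ ω, φ ω ∂μ = 0) (c : ℝ) :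
    ∫ ω, Real.exp (c * φ ω) ∂μ ≤ Real.exp (c ^ 2 * a ^ 2) := by
  have key : ∀ ω, Real.exp (c * φ ω) ≤ c * φ ω + Real.exp (c ^ 2 * a ^ 2) := by
    intro ω
    have h1 := aux_exp_le_add_exp_sq (c * φ ω)
    have h2 : (c * φ ω) ^ 2 ≤ c ^ 2 * a ^ 2 := by
      have : (φ ω) ^ 2 ≤ a ^ 2 := by
        have := hb ω
        nlinarith [abs_nonneg (φ ω), sq_abs (φ ω), neg_abs_le (φ ω), le_abs_self (φ ω)]
      calc (c * φ ω) ^ 2 = c ^ 2 * (φ ω) ^ 2 := by ring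
        _ ≤ c ^ 2 * a ^ 2 := by nlinarith [sq_nonneg c]
    have h3 := Real.exp_le_exp.mpr h2
    linarith
  have hint1 : Integrable φ μ := aux_int_bdd hm hb
  have hint2 : Integrable (fun ω => Real.exp (c * φ ω)) μ := by
    apply aux_int_bdd (by measurability) (b := Real.exp (|c| * a))
    intro ω
    rw [abs_of_pos (Real.exp_pos _)]
    apply Real.exp_le_exp.mpr
    calc c * φ ω ≤ |c * φ ω| := le_abs_self _
      _ = |c| * |φ ω| := abs_mul _ _
      _ ≤ |c| * a := by nlinarith [abs_nonneg c, hb ω]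
  calc ∫ ω, Real.exp (c * φ ω) ∂μ
      ≤ ∫ ω, (c * φ ω + Real.exp (c ^ 2 * a ^ 2)) ∂μ := by
        apply integral_mono hint2 ((hint1.const_mul c).add (integrable_const _)) key
    _ = c * ∫ ω, φ ω ∂μ + Real.exp (c ^ 2 * a ^ 2) := by
        rw [integral_add (hint1.const_mul c) (integrable_const _), MeasureTheory.integral_const_mul,
          integral_const, probReal_univ]
        simp
    _ = Real.exp (c ^ 2 * a ^ 2) := by rw [h0]; ring

lemma aux_chernoff {Ω : Type*} [MeasurableSpace Ω] (μ : Measure Ω) [IsProbabilityMeasure μ]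
    (φ : Ω → ℝ) (hm : Measurable φ) (a : ℝ) (ha : 0 < a) (hb : ∀ ω, |φ ω| ≤ a)
    (h0 : ∫ ω, φ ω ∂μ = 0) (M : ℕ) (t : ℝ) (ht : 0 ≤ t) :
    (Measure.pi fun _ : Fin M => μ) {w | (M : ℝ) * t ≤ ∑ j, φ (w j)} ≤
      ENNReal.ofReal (Real.exp (-((M : ℝ) * t ^ 2 / (4 * a ^ 2)))) := by
  letI : MeasureSpace Ω := ⟨μ⟩
  set ν : Measure (Fin M → Ω) := Measure.pi fun _ : Fin M => μ with hν
  haveI : IsProbabilityMeasure ν := by rw [hν]; infer_instance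
  set c : ℝ := t / (2 * a ^ 2) with hc
  have hc0 : 0 ≤ c := div_nonneg ht (by positivity)
  set X : (Fin M → Ω) → ℝ := fun w => ∑ j, φ (w j) with hX
  have hXm : Measurable X := Finset.measurable_sum _ fun j _ => hm.comp (measurable_pi_apply j)
  have hint : Integrable (fun w => Real.exp (c * X w)) ν := by
    apply aux_int_bdd (by measurability) (b := Real.exp (c * (M * a)))
    intro w
    rw [abs_of_pos (Real.exp_pos _)]
    apply Real.exp_le_exp.mpr
    have : X w ≤ M * a := by
      calc X w ≤ ∑ j : Fin M, a := Finset.sum_le_sum fun j _ => (abs_le.mp (hb _)).2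
        _ = M * a := by simp [mul_comm]
    nlinarith
  have markov := ProbabilityTheory.measure_ge_le_exp_mul_mgf (μ := ν) (X := X)
    ((M : ℝ) * t) hc0 hint
  have hmgf : ProbabilityTheory.mgf X ν c = (∫ ω, Real.exp (c * φ ω) ∂μ) ^ M := by
    rw [ProbabilityTheory.mgf]
    have : ∀ w : Fin M → Ω, Real.exp (c * X w) = ∏ j : Fin M, Real.exp (c * φ (w j)) := by
      intro w
      rw [← Real.exp_sum, hX]
      congr 1
      rw [Finset.mul_sum]
    calc ∫ w, Real.exp (c * X w) ∂ν = ∫ w : Fin M → Ω, ∏ j : Fin M, Real.exp (c * φ (w j)) := by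
          simp_rw [this]; rfl
      _ = (∫ ω, Real.exp (c * φ ω) ∂μ) ^ M := by
          rw [MeasureTheory.volume_pi, MeasureTheory.integral_fintype_prod_eq_pow (ι := Fin M) (fun ω => Real.exp (c * φ ω))]
          simp [Fintype.card_fin]; rfl
  have hmgf_le : ProbabilityTheory.mgf X ν c ≤ Real.exp (c ^ 2 * a ^ 2) ^ M := by
    rw [hmgf]
    apply pow_le_pow_left₀ (integral_nonneg fun ω => (Real.exp_pos _).le)
    exact aux_mgf_bound μ φ hm a ha.le hb h0 c
  have hfinal : (ν {w | (M : ℝ) * t ≤ X w}).toReal ≤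
      Real.exp (-((M : ℝ) * t ^ 2 / (4 * a ^ 2))) := by
    calc (ν {w | (M : ℝ) * t ≤ X w}).toReal
        ≤ Real.exp (-c * ((M : ℝ) * t)) * ProbabilityTheory.mgf X ν c := markov
      _ ≤ Real.exp (-c * ((M : ℝ) * t)) * Real.exp (c ^ 2 * a ^ 2) ^ M := by
          apply mul_le_mul_of_nonneg_left hmgf_le (Real.exp_pos _).le
      _ = Real.exp (-((M : ℝ) * t ^ 2 / (4 * a ^ 2))) := by
          rw [← Real.exp_nat_mul, ← Real.exp_add]
          congr 1
          rw [hc]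
          field_simp
          ring
  exact (ENNReal.le_ofReal_iff_toReal_le (measure_ne_top _ _) (Real.exp_pos _).le).mpr hfinal

set_option synthInstance.maxHeartbeats 1000000 in
lemma aux_mean_mem {Ω X : Type*} [MeasurableSpace Ω] [TopologicalSpace X]
    (μ : Measure Ω) [IsProbabilityMeasure μ]
    (W : Submodule ℝ C₀(X, ℝ)) (R : ℝ) (Z : Ω → W)
    (hZmeas : ∀ x : X, Measurable fun ω => ((Z ω : C₀(X, ℝ)) x))
    (hZbd : ∀ ω x, |(Z ω : C₀(X, ℝ)) x| ≤ R) (S : Finset X) :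
    ∃ f₀ ∈ W, ∀ s ∈ S, (f₀ : C₀(X, ℝ)) s = ∫ ω, (Z ω : C₀(X, ℝ)) s ∂μ := by
  classical
  let π : C₀(X, ℝ) →ₗ[ℝ] EuclideanSpace ℝ {x // x ∈ S} :=
    { toFun := fun f => WithLp.toLp 2 (fun s : {x // x ∈ S} => f s.1)
      map_add' := by intro f g; ext s; simp
      map_smul' := by intro c f; ext s; simp }
  set V : Submodule ℝ (EuclideanSpace ℝ {x // x ∈ S}) := W.map π with hV
  set eS : EuclideanSpace ℝ {x // x ∈ S} := WithLp.toLp 2 (fun s : {x // x ∈ S} => ∫ ω, (Z ω : C₀(X, ℝ)) s.1 ∂μ) with heS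
  have hint : ∀ x : X, Integrable (fun ω => (Z ω : C₀(X, ℝ)) x) μ :=
    fun x => aux_int_bdd (hZmeas x) (fun ω => hZbd ω x)
  haveI : Submodule.HasOrthogonalProjection V := by infer_instance
  have hmem : eS ∈ V := by
    rw [← Submodule.orthogonal_orthogonal V]
    rw [Submodule.mem_orthogonal]
    intro u hu
    have hinner : ∀ v : EuclideanSpace ℝ {x // x ∈ S},
        (inner ℝ u v : ℝ) = ∑ s : {x // x ∈ S}, u s * v s := by
      intro v
      simp [PiLp.inner_apply, RCLike.inner_apply, starRingEnd_apply, mul_comm]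
    rw [hinner]
    have hswap : ∀ s : {x // x ∈ S}, u s * eS s = ∫ ω, u s * (Z ω : C₀(X, ℝ)) s.1 ∂μ := by
      intro s
      rw [heS]
      exact (MeasureTheory.integral_const_mul _ _).symm
    simp_rw [hswap]
    rw [← MeasureTheory.integral_finset_sum]
    · have : ∀ ω, ∑ s : {x // x ∈ S}, u s * (Z ω : C₀(X, ℝ)) s.1 = 0 := by
        intro ω
        have hZV : π (Z ω : C₀(X, ℝ)) ∈ V := Submodule.mem_map_of_mem (Z ω).2
        have h2 := hu _ hZV
        rw [real_inner_comm, hinner] at h2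
        simpa [π] using h2
      simp_rw [this]
      simp
    · intro s _
      exact (hint s.1).const_mul _
  obtain ⟨f₀, hf₀W, hf₀⟩ := hmem
  refine ⟨f₀, hf₀W, fun s hs => ?_⟩
  have := congrArg (fun v => v ⟨s, hs⟩) hf₀
  simpa [π, heS] using this

/-- uniform concentration of empirical means over a subspace of C₀(X)
admitting a finite norming set. -/
theorem stmt11 {Ω X : Type*} [MeasurableSpace Ω] [TopologicalSpace X]
    (μ : Measure Ω) [IsProbabilityMeasure μ]
    (W : Submodule ℝ C₀(X, ℝ))
    (C : Finset X) (hCne : C.Nonempty) (N R : ℝ) (hN : 0 < N) (hR : 0 < R)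
    (hnorm : ∀ f ∈ W, ∀ x : X, |f x| ≤ N * C.sup' hCne fun y => |f y|)
    (Z : Ω → W)
    (hZmeas : ∀ x : X, Measurable fun ω => ((Z ω : C₀(X, ℝ)) x))
    (hZbd : ∀ ω x, |(Z ω : C₀(X, ℝ)) x| ≤ R)
    (δ : ℝ) (hδ : 0 < δ) (M : ℕ) (hM : 0 < M) :
    (Measure.pi fun _ : Fin M => μ)
      {w : Fin M → Ω |
        4 * N * R * Real.sqrt (Real.log (2 * C.card / δ) / M) ≤
          ⨆ x : X,
            |(1 / (M : ℝ)) * ∑ j, (Z (w j) : C₀(X, ℝ)) x - ∫ ω, (Z ω : C₀(X, ℝ)) x ∂μ|} ≤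
      ENNReal.ofReal δ := by
  classical
  haveI : IsProbabilityMeasure (Measure.pi fun _ : Fin M => μ) := by infer_instance
  rcases le_or_gt 1 δ with hδ1 | hδ1
  · calc (Measure.pi fun _ : Fin M => μ) _ ≤ 1 := prob_le_one
      _ ≤ ENNReal.ofReal δ := by
          rw [← ENNReal.ofReal_one]; exact ENNReal.ofReal_le_ofReal hδ1
  haveI : Nonempty X := ⟨hCne.choose⟩
  have hM' : (0:ℝ) < M := by exact_mod_cast hM
  have hMne : (M:ℝ) ≠ 0 := ne_of_gt hM'
  set e : X → ℝ := fun x => ∫ ω, (Z ω : C₀(X, ℝ)) x ∂μ with he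
  have hint : ∀ x : X, Integrable (fun ω => (Z ω : C₀(X, ℝ)) x) μ :=
    fun x => aux_int_bdd (hZmeas x) (fun ω => hZbd ω x)
  have heR : ∀ x, |e x| ≤ R := by
    intro x
    calc |e x| ≤ ∫ ω, |(Z ω : C₀(X, ℝ)) x| ∂μ := by
          rw [he]
          simpa [Real.norm_eq_abs] using
            norm_integral_le_integral_norm (μ := μ) (fun ω => (Z ω : C₀(X, ℝ)) x)
      _ ≤ ∫ _ω, R ∂μ := integral_mono (hint x).abs (integrable_const R) (fun ω => hZbd ω x)
      _ = R := by simp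
  have hcard1 : (1:ℝ) ≤ C.card := by exact_mod_cast hCne.card_pos
  have hcardne : (C.card:ℝ) ≠ 0 := by positivity
  have hfrac : (0:ℝ) < 2 * C.card / δ := by positivity
  have hfrac1 : (1:ℝ) < 2 * C.card / δ := by
    rw [lt_div_iff₀ hδ]; nlinarith
  set L := Real.log (2 * C.card / δ) with hLdef
  have hL0 : 0 < L := Real.log_pos hfrac1
  set s := Real.sqrt (L / M) with hsdef
  have hs0 : 0 < s := Real.sqrt_pos.mpr (div_pos hL0 hM')
  have hsq : s ^ 2 = L / M := Real.sq_sqrt (div_pos hL0 hM').le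
  -- norming inequality extended to differences with e
  have normE : ∀ g : W, ∀ x : X,
      |(g : C₀(X, ℝ)) x - e x| ≤ N * C.sup' hCne fun y => |(g : C₀(X, ℝ)) y - e y| := by
    intro g x
    obtain ⟨f₀, hf₀W, hf₀⟩ := aux_mean_mem μ W R Z hZmeas hZbd (insert x C)
    have hgf : (g : C₀(X, ℝ)) - f₀ ∈ W := W.sub_mem g.2 hf₀W
    have h1 := hnorm ((g : C₀(X, ℝ)) - f₀) hgf x
    have hx : f₀ x = e x := hf₀ x (Finset.mem_insert_self x C)
    have hy : ∀ y ∈ C, f₀ y = e y := fun y hy => hf₀ y (Finset.mem_insert_of_mem hy)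
    calc |(g : C₀(X, ℝ)) x - e x| = |((g : C₀(X, ℝ)) - f₀) x| := by rw [← hx]; simp
      _ ≤ N * C.sup' hCne fun y => |((g : C₀(X, ℝ)) - f₀) y| := h1
      _ = N * C.sup' hCne fun y => |(g : C₀(X, ℝ)) y - e y| := by
          congr 1
          apply Finset.sup'_congr hCne rfl
          intro y hyC
          rw [show ((g : C₀(X, ℝ)) - f₀) y = (g : C₀(X, ℝ)) y - f₀ y by simp, hy y hyC]
  set φ : X → Ω → ℝ := fun y ω => (Z ω : C₀(X, ℝ)) y - e y with hφ
  have hφm : ∀ y, Measurable (φ y) := fun y => (hZmeas y).sub measurable_const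
  have hφb : ∀ y ω, |φ y ω| ≤ 2 * R := by
    intro y ω
    have h1 := hZbd ω y
    have h2 := heR y
    calc |φ y ω| ≤ |(Z ω : C₀(X, ℝ)) y| + |e y| := abs_sub _ _
      _ ≤ 2 * R := by linarith
  have hφ0 : ∀ y, ∫ ω, φ y ω ∂μ = 0 := by
    intro y
    rw [hφ]
    rw [integral_sub (hint y) (integrable_const _), integral_const, probReal_univ]
    simp [he]
  set t : ℝ := 4 * R * s with htdef
  have ht0 : 0 ≤ t := by positivity
  -- inclusion into union of pointwise events
  have hsub : {w : Fin M → Ω |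
        4 * N * R * Real.sqrt (Real.log (2 * C.card / δ) / M) ≤
          ⨆ x : X,
            |(1 / (M : ℝ)) * ∑ j, (Z (w j) : C₀(X, ℝ)) x - ∫ ω, (Z ω : C₀(X, ℝ)) x ∂μ|} ⊆
      ⋃ y ∈ C, ({w : Fin M → Ω | (M : ℝ) * t ≤ ∑ j, φ y (w j)} ∪
        {w : Fin M → Ω | (M : ℝ) * t ≤ ∑ j, -(φ y (w j))}) := by
    intro w hw
    simp only [Set.mem_setOf_eq] at hw
    set gW : W := (M:ℝ)⁻¹ • ∑ j, Z (w j) with hgW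
    have hgapp : ∀ x : X, (gW : C₀(X, ℝ)) x = (1 / (M : ℝ)) * ∑ j, (Z (w j) : C₀(X, ℝ)) x := by
      intro x
      have h1 : (gW : C₀(X, ℝ)) = (M:ℝ)⁻¹ • ∑ j : Fin M, (Z (w j) : C₀(X, ℝ)) := by
        rw [hgW]
        push_cast
        rfl
      have hsum : (∑ j : Fin M, (Z (w j) : C₀(X, ℝ))) x = ∑ j : Fin M, (Z (w j) : C₀(X, ℝ)) x := by
        let ev : C₀(X, ℝ) →+ ℝ :=
          { toFun := fun f => f x, map_zero' := rfl, map_add' := fun f g => rfl }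
        exact map_sum ev _ _
      rw [h1, ZeroAtInftyContinuousMap.smul_apply, hsum, smul_eq_mul, one_div]
    have hw2 : 4 * N * R * s ≤ N * C.sup' hCne fun y => |(gW : C₀(X, ℝ)) y - e y| := by
      refine le_trans hw (ciSup_le fun x => ?_)
      rw [← hgapp x]
      exact normE gW x
    have h3 : 4 * R * s ≤ C.sup' hCne fun y => |(gW : C₀(X, ℝ)) y - e y| := by
      apply le_of_mul_le_mul_left _ hN
      calc N * (4 * R * s) = 4 * N * R * s := by ring
        _ ≤ N * C.sup' hCne fun y => |(gW : C₀(X, ℝ)) y - e y| := hw2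
    obtain ⟨y, hyC, hyEq⟩ := Finset.exists_mem_eq_sup' hCne (fun y => |(gW : C₀(X, ℝ)) y - e y|)
    have h4 : 4 * R * s ≤ |(gW : C₀(X, ℝ)) y - e y| := hyEq ▸ h3
    have h5 : (gW : C₀(X, ℝ)) y - e y = (1 / (M : ℝ)) * ∑ j, φ y (w j) := by
      rw [hgapp y, hφ]
      have hsum : ∑ j : Fin M, ((Z (w j) : C₀(X, ℝ)) y - e y)
          = (∑ j : Fin M, (Z (w j) : C₀(X, ℝ)) y) - M * e y := by
        rw [Finset.sum_sub_distrib, Finset.sum_const, Finset.card_univ, Fintype.card_fin,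
          nsmul_eq_mul]
      rw [hsum]
      field_simp
    have h6 : (M : ℝ) * t ≤ |∑ j, φ y (w j)| := by
      have habs : |(gW : C₀(X, ℝ)) y - e y| = (1 / (M : ℝ)) * |∑ j, φ y (w j)| := by
        rw [h5, abs_mul, abs_of_pos (by positivity : (0:ℝ) < 1 / (M:ℝ))]
      rw [habs] at h4
      rw [htdef]
      have := mul_le_mul_of_nonneg_left h4 hM'.le
      calc (M:ℝ) * (4 * R * s) ≤ (M:ℝ) * ((1 / (M:ℝ)) * |∑ j, φ y (w j)|) := this
        _ = |∑ j, φ y (w j)| := by field_simp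
    refine Set.mem_biUnion hyC ?_
    rcases le_abs.mp h6 with h | h
    · exact Or.inl h
    · refine Or.inr ?_
      simpa [Finset.sum_neg_distrib] using h
  -- per-point Chernoff bounds
  have hbound : ∀ y : X,
      (Measure.pi fun _ : Fin M => μ) {w : Fin M → Ω | (M : ℝ) * t ≤ ∑ j, φ y (w j)} ≤
        ENNReal.ofReal (δ / (2 * C.card)) ∧
      (Measure.pi fun _ : Fin M => μ) {w : Fin M → Ω | (M : ℝ) * t ≤ ∑ j, -(φ y (w j))} ≤
        ENNReal.ofReal (δ / (2 * C.card)) := by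
    intro y
    have hexp : Real.exp (-((M : ℝ) * t ^ 2 / (4 * (2 * R) ^ 2))) = δ / (2 * C.card) := by
      have harg : (M : ℝ) * t ^ 2 / (4 * (2 * R) ^ 2) = L := by
        rw [htdef]
        have : (4 * R * s) ^ 2 = 16 * R ^ 2 * s ^ 2 := by ring
        rw [this, hsq]
        field_simp
        ring
      rw [harg, hLdef, Real.exp_neg, Real.exp_log hfrac, inv_div]
    constructor
    · have := aux_chernoff μ (φ y) (hφm y) (2 * R) (by positivity) (hφb y) (hφ0 y) M t ht0
      rwa [hexp] at this
    · have hm' : Measurable (fun ω => -(φ y ω)) := (hφm y).neg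
      have hb' : ∀ ω, |-(φ y ω)| ≤ 2 * R := fun ω => by rw [abs_neg]; exact hφb y ω
      have h0' : ∫ ω, -(φ y ω) ∂μ = 0 := by rw [integral_neg, hφ0 y, neg_zero]
      have := aux_chernoff μ (fun ω => -(φ y ω)) hm' (2 * R) (by positivity) hb' h0' M t ht0
      rwa [hexp] at this
  calc (Measure.pi fun _ : Fin M => μ) _
      ≤ (Measure.pi fun _ : Fin M => μ)
        (⋃ y ∈ C, ({w : Fin M → Ω | (M : ℝ) * t ≤ ∑ j, φ y (w j)} ∪
          {w : Fin M → Ω | (M : ℝ) * t ≤ ∑ j, -(φ y (w j))})) := measure_mono hsub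
    _ ≤ ∑ y ∈ C, (Measure.pi fun _ : Fin M => μ)
          ({w : Fin M → Ω | (M : ℝ) * t ≤ ∑ j, φ y (w j)} ∪
            {w : Fin M → Ω | (M : ℝ) * t ≤ ∑ j, -(φ y (w j))}) := measure_biUnion_finset_le _ _
    _ ≤ ∑ _y ∈ C, (ENNReal.ofReal (δ / (2 * C.card)) + ENNReal.ofReal (δ / (2 * C.card))) := by
        apply Finset.sum_le_sum
        intro y _
        exact le_trans (measure_union_le _ _) (add_le_add (hbound y).1 (hbound y).2)
    _ = ENNReal.ofReal δ := by
        rw [Finset.sum_const, ← ENNReal.ofReal_add (by positivity) (by positivity)]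
        have : δ / (2 * C.card) + δ / (2 * C.card) = δ / C.card := by
          field_simp
          ring
        rw [this, nsmul_eq_mul, ← ENNReal.ofReal_natCast C.card,
          ← ENNReal.ofReal_mul (by positivity)]
        congr 1
        field_simp
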